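/- Let A be an n×n matrix over a commutative ring, λ a scalar with a right eigenvector v (Av = λv) and a left eigenvector w (w^T A = λ w^T). Then for each j = 1,…,n: v_j w_j · p_A'(λ) = (w^T v) · p_{M_j}(λ), where M_j is the minor of A deleting row and column j. -/

import Mathlib

open Polynomial Matrix

private lemma updateRow_updateRow' {R : Type*} [CommRing R] {n : ℕ}
    (B : Matrix (Fin n) (Fin n) R) (j : Fin n) (a b : Fin n → R) :
    (B.updateRow j a).updateRow j b = B.updateRow j b := by
  ext i k
  by_cases h : i = j <;> simp [Matrix.updateRow_apply, h]

/-- Column lemma: if `B *ᵥ v = 0` then columns of `adjugate B` are proportional to `v`. -/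
private lemma adjugate_col_prop {R : Type*} [CommRing R] {n : ℕ}
    (B : Matrix (Fin n) (Fin n) R) (v : Fin n → R) (hv : B.mulVec v = 0)
    (i m j : Fin n) :
    B.adjugate i j * v m = v i * B.adjugate m j := by
  set C := B.updateRow j (Pi.single i 1) with hC
  have hCv : C.mulVec v = Pi.single j (v i) := by
    ext k
    by_cases h : k = j
    · subst h
      simp [C, Matrix.mulVec, dotProduct, Pi.single_apply, ite_mul]
    · have h' : C.mulVec v k = B.mulVec v k := by
        simp [Matrix.mulVec, dotProduct, C, Matrix.updateRow_ne h]
      rw [h', hv]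
      simp [Pi.single_apply, h]
  have key : (C.adjugate).mulVec (C.mulVec v) = C.det • v := by
    rw [Matrix.mulVec_mulVec, Matrix.adjugate_mul, Matrix.smul_mulVec,
      Matrix.one_mulVec]
  rw [hCv, Matrix.mulVec_single] at key
  have hm : C.adjugate m j * v i = C.det * v m := by
    have h := congrFun key m
    simp only [Pi.smul_apply, smul_eq_mul] at h
    exact h
  have h2 : C.adjugate m j = B.adjugate m j := by
    rw [Matrix.adjugate_apply, Matrix.adjugate_apply, hC, updateRow_updateRow']
  have h3 : C.det = B.adjugate i j := (Matrix.adjugate_apply B i j).symm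
  rw [h2, h3] at hm
  linear_combination -hm

/-- evaluating the charmatrix entrywise -/
private lemma charmatrix_map_eval' {R : Type*} [CommRing R] {n : ℕ}
    (A : Matrix (Fin n) (Fin n) R) (lam : R) :
    (charmatrix A).map (Polynomial.eval lam) = lam • (1 : Matrix (Fin n) (Fin n) R) - A := by
  ext i j
  by_cases h : i = j
  · subst h
    simp [charmatrix_apply_eq, Matrix.one_apply]
  · simp [charmatrix_apply_ne _ _ _ h, Matrix.one_apply_ne h]

private lemma eval_charpoly'' {R : Type*} [CommRing R] {n : ℕ}
    (A : Matrix (Fin n) (Fin n) R) (lam : R) :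
    A.charpoly.eval lam = (lam • (1 : Matrix (Fin n) (Fin n) R) - A).det := by
  rw [Matrix.charpoly]
  have h := RingHom.map_det (Polynomial.evalRingHom lam) (charmatrix A)
  simp only [RingHom.mapMatrix_apply, Polynomial.coe_evalRingHom] at h
  rw [h, charmatrix_map_eval']

open Polynomial in
/-- Grinberg's generalization of the eigenvector-eigenvalue identity: no
diagonalizability assumption. -/
theorem eigenvector_eigenvalue_identity_general {R : Type*} [CommRing R] {n : ℕ}
    (A : Matrix (Fin (n+1)) (Fin (n+1)) R) (lam : R)
    (v w : Fin (n+1) → R)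
    (hv : A.mulVec v = lam • v) (hw : A.vecMul w = lam • w) :
    ∀ j : Fin (n+1),
      v j * w j * (Polynomial.derivative A.charpoly).eval lam
        = dotProduct w v *
            ((A.submatrix j.succAbove j.succAbove).charpoly.eval lam) := by
  intro j
  set B : Matrix (Fin (n+1)) (Fin (n+1)) R := lam • 1 - A with hBdef
  have hBw : Bᵀ.mulVec w = 0 := by
    rw [hBdef, Matrix.transpose_sub, Matrix.transpose_smul, Matrix.transpose_one,
      Matrix.sub_mulVec, Matrix.smul_mulVec, Matrix.one_mulVec,
      Matrix.mulVec_transpose, hw, sub_self]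
  -- row proportionality of the adjugate
  have hrow : ∀ k : Fin (n+1), B.adjugate j j * w k = w j * B.adjugate j k := by
    intro k
    have h := adjugate_col_prop Bᵀ w hBw j k j
    rw [← Matrix.adjugate_transpose] at h
    simpa [Matrix.transpose_apply] using h
  -- derivative identity : p'(lam) * v k = ∑ l adj(B) k l * v l
  have hadjmap : (charmatrix A).adjugate.map (Polynomial.eval lam) = B.adjugate := by
    have h := RingHom.map_adjugate (Polynomial.evalRingHom lam) (charmatrix A)
    simp only [RingHom.mapMatrix_apply, Polynomial.coe_evalRingHom] at h
    rw [h, charmatrix_map_eval']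
  have hderiv : ∀ k : Fin (n+1), (Polynomial.derivative A.charpoly).eval lam * v k
      = ∑ l, B.adjugate k l * v l := by
    set V : Fin (n+1) → R[X] := fun l => Polynomial.C (v l) with hV
    have hMV : (charmatrix A).mulVec V = (X - Polynomial.C lam) • V := by
      have h1 : ((C : R →+* R[X]).mapMatrix A).mulVec V = (Polynomial.C lam) • V := by
        funext k
        simp only [RingHom.mapMatrix_apply, hV, Pi.smul_apply, smul_eq_mul]
        calc ((A.map (C : R →+* R[X])) *ᵥ fun l => Polynomial.C (v l)) k
            = Polynomial.C ((A *ᵥ v) k) :=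
              (RingHom.map_mulVec (Polynomial.C : R →+* R[X]) A v k).symm
          _ = Polynomial.C lam * Polynomial.C (v k) := by rw [hv]; simp
      have h2 : (Matrix.scalar (Fin (n+1)) (X : R[X])).mulVec V = (X : R[X]) • V := by
        rw [Matrix.scalar_apply]
        rw [← Matrix.smul_one_eq_diagonal, Matrix.smul_mulVec, Matrix.one_mulVec]
      rw [charmatrix, Matrix.sub_mulVec, h1, h2, sub_smul]
    have hkey : (X - Polynomial.C lam) • ((charmatrix A).adjugate.mulVec V)
        = A.charpoly • V := by
      have h := congrArg (fun u => (charmatrix A).adjugate.mulVec u) hMV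
      simpa [Matrix.mulVec_mulVec, Matrix.adjugate_mul, Matrix.smul_mulVec,
        Matrix.one_mulVec, Matrix.mulVec_smul, Matrix.charpoly] using h.symm
    intro k
    have hk := congrFun hkey k
    simp only [Pi.smul_apply, smul_eq_mul] at hk
    have hd := congrArg (fun p => Polynomial.eval lam (Polynomial.derivative p)) hk
    simp only [Polynomial.derivative_mul, Polynomial.derivative_sub,
      Polynomial.derivative_X, Polynomial.derivative_C, sub_zero, one_mul,
      Polynomial.eval_add, Polynomial.eval_mul, Polynomial.eval_sub,
      Polynomial.eval_X, Polynomial.eval_C, sub_self, zero_mul, mul_zero,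
      add_zero, Polynomial.derivative_C, hV] at hd
    -- hd : eval lam ((adj M *ᵥ V) k) = eval lam (derivative charpoly) * v k
    rw [← hd]
    have : ((charmatrix A).adjugate *ᵥ V) k = ∑ l, (charmatrix A).adjugate k l * V l := rfl
    rw [this, Polynomial.eval_finset_sum]
    refine Finset.sum_congr rfl fun l _ => ?_
    rw [hV]
    simp only [Polynomial.eval_mul, Polynomial.eval_C]
    congr 1
    rw [← hadjmap]
    simp [Matrix.map_apply]
  -- the diagonal adjugate entry is the charpoly of the minor
  have hdiag : B.adjugate j j = (A.submatrix j.succAbove j.succAbove).charpoly.eval lam := by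
    rw [Matrix.adjugate_fin_succ_eq_det_submatrix, eval_charpoly'']
    have hsub : B.submatrix j.succAbove j.succAbove
        = lam • 1 - A.submatrix j.succAbove j.succAbove := by
      ext a b
      simp [hBdef, Matrix.submatrix_apply, Matrix.sub_apply, Matrix.smul_apply,
        Matrix.one_apply, Fin.succAbove_right_injective.eq_iff, smul_eq_mul]
    rw [hsub, Even.neg_one_pow ⟨(j : ℕ), rfl⟩, one_mul]
  -- put everything together
  calc v j * w j * (Polynomial.derivative A.charpoly).eval lam
      = w j * ((Polynomial.derivative A.charpoly).eval lam * v j) := by ring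
    _ = w j * ∑ l, B.adjugate j l * v l := by rw [hderiv j]
    _ = ∑ l, (w j * B.adjugate j l) * v l := by rw [Finset.mul_sum]; ring_nf
    _ = ∑ l, (B.adjugate j j * w l) * v l := by
        refine Finset.sum_congr rfl fun l _ => ?_
        rw [hrow l]
    _ = dotProduct w v * B.adjugate j j := by
        rw [dotProduct, Finset.sum_mul]
        refine Finset.sum_congr rfl fun l _ => ?_
        ring
    _ = dotProduct w v *
          ((A.submatrix j.succAbove j.succAbove).charpoly.eval lam) := by rw [hdiag]
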